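/- Characterization of the ESS operator for communication games (Theorem 4.2): Let Φ : F_G → F_G be an operator. Then Φ is an efficient-fair extension operator satisfying (WEES) and (ET) such that Φ(f) satisfies (f-FDS) for every f ∈ F_G, if and only if for every f ∈ F_G, every communication game (v,g) and every i ∈ N, Φ_i(f)(v,g) = f_i(v,g) + (1/n)·(v(N) − Σ_{k∈N} f_k(v,g)). -/

import Mathlib

/-!
Theorem 4.2: characterization of the ESS operator as the unique efficient-fair
extension operator for communication games.
-/

namespace Stmt4

/-- A TU-game on the player set `N`: a function on coalitions vanishing at `∅`. -/
abbrev Game (N : Type*) := {v : Finset N → ℝ // v ∅ = 0}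

/-- A solution for communication games. -/
abbrev GSolution (N : Type*) := Game N → SimpleGraph N → N → ℝ

variable {N : Type*} [Fintype N] [DecidableEq N]

/-- The component of `N/g` containing the player `i`. -/
noncomputable def comp (g : SimpleGraph N) (i : N) : Finset N :=
  (Set.toFinite {j | g.Reachable i j}).toFinset

/-- Efficiency (E). -/
def Efficient (φ : GSolution N) : Prop :=
  ∀ (v : Game N) (g : SimpleGraph N), ∑ i, φ v g i = v.1 Finset.univ

/-- Fairness at `v` (FA-`v`). -/
def FAat (φ : GSolution N) (v : Game N) : Prop :=
  ∀ (g : SimpleGraph N) (i j : N), g.Adj i j →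
    φ v g i - φ v (g.deleteEdges {s(i, j)}) i =
      φ v g j - φ v (g.deleteEdges {s(i, j)}) j

/-- `f`-fair distribution of the surplus (`f`-FDS). -/
def FDS (f φ : GSolution N) : Prop :=
  ∀ (v : Game N) (g : SimpleGraph N) (i j : N),
    (1 / ((comp g i).card : ℝ)) * ∑ k ∈ comp g i, (φ v g k - f v g k) =
      (1 / ((comp g j).card : ℝ)) * ∑ k ∈ comp g j, (φ v g k - f v g k)

/-- Equal treatment (ET) for an operator on solutions of communication games. -/
def ET (Φ : GSolution N → GSolution N) : Prop :=
  ∀ (f : GSolution N) (g : SimpleGraph N) (i j : N),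
    (∀ v, f v g i = f v g j) → ∀ v, Φ f v g i = Φ f v g j

/-- Weak equality for equal surplus (WEES) for an operator. -/
def WEES (Φ : GSolution N → GSolution N) : Prop :=
  ∀ (f f' : GSolution N) (g : SimpleGraph N) (i : N),
    (∀ v, (∑ k, f v g k) = ∑ k, f' v g k) → (∀ v, f v g i = f' v g i) →
    ∀ v, Φ f v g i = Φ f' v g i

lemma mem_comp_iff (g : SimpleGraph N) (i j : N) :
    j ∈ comp g i ↔ g.Reachable i j := by
  simp [comp, Set.Finite.mem_toFinset]

lemma mem_comp_self (g : SimpleGraph N) (i : N) : i ∈ comp g i :=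
  (mem_comp_iff g i i).2 (SimpleGraph.Reachable.refl i)

lemma comp_card_ne_zero (g : SimpleGraph N) (i : N) :
    ((comp g i).card : ℝ) ≠ 0 := by
  have : 0 < (comp g i).card := Finset.card_pos.2 ⟨i, mem_comp_self g i⟩
  exact_mod_cast this.ne'

lemma avg_const (g : SimpleGraph N) (i : N) (c : ℝ) :
    (1 / ((comp g i).card : ℝ)) * ∑ _k ∈ comp g i, c = c := by
  rw [Finset.sum_const, nsmul_eq_mul]
  have h := comp_card_ne_zero g i
  field_simp

/-- Theorem 4.2: `Φ` is an efficient-fair extension operator (it makes every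
solution efficient and preserves fairness at every game where it holds)
satisfying (WEES) and (ET) such that `Φ(f)` satisfies (`f`-FDS) for all `f`,
iff `Φ` is the egalitarian surplus sharing operator. -/
theorem efficient_fair_operator [Nonempty N]
    (Φ : GSolution N → GSolution N) :
    ((∀ f : GSolution N, Efficient (Φ f)) ∧
     (∀ (f : GSolution N) (v : Game N), FAat f v → FAat (Φ f) v) ∧
     WEES Φ ∧ ET Φ ∧ (∀ f : GSolution N, FDS f (Φ f))) ↔
      (∀ (f : GSolution N) (v : Game N) (g : SimpleGraph N) (i : N),
        Φ f v g i = f v g i +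
          (1 / (Fintype.card N : ℝ)) * (v.1 Finset.univ - ∑ k, f v g k)) := by
  have hn : ((Fintype.card N : ℝ)) ≠ 0 := by
    exact_mod_cast (Fintype.card_ne_zero (α := N))
  constructor
  · rintro ⟨hE, hFAp, hW, _hET, hFDS⟩
    intro f v g i
    -- replace f by a graph-independent solution
    set f'' : GSolution N := fun w _ k => f w g k with hf''
    have hswap : Φ f v g i = Φ f'' v g i :=
      hW f f'' g i (fun _ => rfl) (fun _ => rfl) v
    have hfa'' : FAat f'' v := by
      intro g' a b _
      simp [hf'']
    have hfaΦ : FAat (Φ f'') v := hFAp f'' v hfa''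
    -- main induction on the number of edges
    have key : ∀ m (h : SimpleGraph N), h.edgeSet.ncard = m → ∀ k,
        Φ f'' v h k = f v g k +
          (1 / (Fintype.card N : ℝ)) * (v.1 Finset.univ - ∑ k, f v g k) := by
      intro m
      induction m using Nat.strong_induction_on with
      | _ m IH =>
      intro h hm k
      -- surplus is equal across adjacent players
      have hadjσ : ∀ a b, h.Adj a b →
          Φ f'' v h a - f v g a = Φ f'' v h b - f v g b := by
        intro a b hab
        have hmem : s(a, b) ∈ h.edgeSet := h.mem_edgeSet.2 hab
        have hfin : h.edgeSet.Finite := Set.toFinite _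
        have hlt : (h.deleteEdges {s(a, b)}).edgeSet.ncard < m := by
          rw [SimpleGraph.edgeSet_deleteEdges, ← hm]
          exact Set.ncard_diff_singleton_lt_of_mem hmem hfin
        have IHd := IH _ hlt (h.deleteEdges {s(a, b)}) rfl
        have hfa := hfaΦ h a b hab
        rw [IHd a, IHd b] at hfa
        linarith
      have hreach : ∀ a b, h.Reachable a b →
          Φ f'' v h a - f v g a = Φ f'' v h b - f v g b := by
        intro a b hr
        obtain ⟨w⟩ := hr
        induction w with
        | nil => rfl
        | cons hadj _ ih => exact (hadjσ _ _ hadj).trans ih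
      -- component sums
      have hcompsum : ∀ a, ∑ k ∈ comp h a, (Φ f'' v h k - f'' v h k)
          = ((comp h a).card : ℝ) * (Φ f'' v h a - f v g a) := by
        intro a
        rw [Finset.sum_congr rfl (fun x hx => by
          have : h.Reachable a x := (mem_comp_iff h a x).1 hx
          show Φ f'' v h x - f'' v h x = Φ f'' v h a - f v g a
          exact (hreach a x this).symm), Finset.sum_const, nsmul_eq_mul]
      -- surplus equal across all players via FDS
      have hconst : ∀ a b, Φ f'' v h a - f v g a = Φ f'' v h b - f v g b := by
        intro a b
        have hfds := hFDS f'' v h a b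
        rw [hcompsum a, hcompsum b] at hfds
        have ha := comp_card_ne_zero h a
        have hb := comp_card_ne_zero h b
        field_simp at hfds
        exact hfds
      -- efficiency pins down the constant
      have hsum := hE f'' v h
      have hrw : ∑ a, Φ f'' v h a
          = ∑ a, (f v g a + (Φ f'' v h k - f v g k)) := by
        refine Finset.sum_congr rfl (fun a _ => ?_)
        have := hconst a k
        linarith
      rw [hrw, Finset.sum_add_distrib, Finset.sum_const, nsmul_eq_mul,
        Finset.card_univ] at hsum
      have : Φ f'' v h k - f v g k
          = (1 / (Fintype.card N : ℝ)) * (v.1 Finset.univ - ∑ k, f v g k) := by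
        field_simp
        linarith
      linarith
    rw [hswap, key g.edgeSet.ncard g rfl i]
  · intro hΦ
    refine ⟨?_, ?_, ?_, ?_, ?_⟩
    · intro f v g
      simp only [hΦ]
      rw [Finset.sum_add_distrib, Finset.sum_const, nsmul_eq_mul,
        Finset.card_univ]
      field_simp
      ring
    · intro f v hfa g i j hij
      have h1 := hΦ f v g i
      have h2 := hΦ f v (g.deleteEdges {s(i, j)}) i
      have h3 := hΦ f v g j
      have h4 := hΦ f v (g.deleteEdges {s(i, j)}) j
      have := hfa g i j hij
      rw [h1, h2, h3, h4]
      linarith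
    · intro f f' g i hsum hi v
      rw [hΦ, hΦ, hsum v, hi v]
    · intro f g i j hij v
      rw [hΦ, hΦ, hij v]
    · intro f v g i j
      have hc : ∀ a, Φ f v g a - f v g a
          = (1 / (Fintype.card N : ℝ)) * (v.1 Finset.univ - ∑ k, f v g k) := by
        intro a; rw [hΦ]; ring
      calc (1 / ((comp g i).card : ℝ)) * ∑ k ∈ comp g i, (Φ f v g k - f v g k)
          = (1 / ((comp g i).card : ℝ)) * ∑ _k ∈ comp g i,
            (1 / (Fintype.card N : ℝ)) * (v.1 Finset.univ - ∑ k, f v g k) := by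
            rw [Finset.sum_congr rfl (fun x _ => hc x)]
        _ = (1 / (Fintype.card N : ℝ)) * (v.1 Finset.univ - ∑ k, f v g k) :=
            avg_const g i _
        _ = (1 / ((comp g j).card : ℝ)) * ∑ _k ∈ comp g j,
            (1 / (Fintype.card N : ℝ)) * (v.1 Finset.univ - ∑ k, f v g k) :=
            (avg_const g j _).symm
        _ = (1 / ((comp g j).card : ℝ)) * ∑ k ∈ comp g j, (Φ f v g k - f v g k) := by
            rw [Finset.sum_congr rfl (fun x _ => (hc x).symm)]

end Stmt4
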